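/- Let λ ∈ {1,-1} and q, p ∈ ℂ, and let M(k) = 2ik²σ₃ - Q̃(k) for k ∈ ℂ. Then for every k ∈ ℂ, det M(k) - det M(-k) = 4iλk (conj(q)·p - q·conj(p)). Consequently, det M(k) = det M(-k) holds for all k ∈ ℂ if and only if q·conj(p) - conj(q)·p = 0. -/

import Mathlib

open Complex Matrix

/-- The Pauli matrix `σ₃ = diag(1,-1)`. -/
def sigma3 : Matrix (Fin 2) (Fin 2) ℂ := !![1, 0; 0, -1]

/-- The matrix `Q̃(k)` built from boundary values `q = q(0,t)`, `p = qₓ(0,t)`: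
`Q̃(k) = [[iλ|q|², 2kq + ip], [-2kλ·conj(q) + iλ·conj(p), -iλ|q|²]]`. -/
noncomputable def Qtilde (lam q p k : ℂ) : Matrix (Fin 2) (Fin 2) ℂ :=
  !![Complex.I * lam * (‖q‖ : ℂ) ^ 2, 2 * k * q + Complex.I * p;
     -2 * k * lam * (starRingEnd ℂ) q + Complex.I * lam * (starRingEnd ℂ) p,
     -(Complex.I * lam * (‖q‖ : ℂ) ^ 2)]

/-- For `λ ∈ {1,-1}` and `M(k) = 2ik²σ₃ - Q̃(k)`, one has
`det M(k) - det M(-k) = 4iλk (conj(q)·p - q·conj(p))`; consequently `det M(k)` is even in `k`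
iff `q·conj(p) - conj(q)·p = 0`. -/
theorem detM_even_iff (lam : ℂ) (hlam : lam = 1 ∨ lam = -1) (q p : ℂ) :
    (∀ k : ℂ,
      ((2 * Complex.I * k ^ 2) • sigma3 - Qtilde lam q p k).det
        - ((2 * Complex.I * (-k) ^ 2) • sigma3 - Qtilde lam q p (-k)).det
      = 4 * Complex.I * lam * k * ((starRingEnd ℂ) q * p - q * (starRingEnd ℂ) p)) ∧
    ((∀ k : ℂ,
      ((2 * Complex.I * k ^ 2) • sigma3 - Qtilde lam q p k).det
        = ((2 * Complex.I * (-k) ^ 2) • sigma3 - Qtilde lam q p (-k)).det)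
      ↔ q * (starRingEnd ℂ) p - (starRingEnd ℂ) q * p = 0) := by
  have hlam0 : lam ≠ 0 := by rcases hlam with h | h <;> simp [h]
  have key : ∀ k : ℂ,
      ((2 * Complex.I * k ^ 2) • sigma3 - Qtilde lam q p k).det
        - ((2 * Complex.I * (-k) ^ 2) • sigma3 - Qtilde lam q p (-k)).det
      = 4 * Complex.I * lam * k * ((starRingEnd ℂ) q * p - q * (starRingEnd ℂ) p) := by
    intro k
    simp [sigma3, Qtilde, Matrix.det_fin_two, Matrix.smul_apply]
    ring
  refine ⟨key, ?_, ?_⟩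
  · intro h
    have h1 := key 1
    rw [h 1, sub_self] at h1
    have h4 : 4 * Complex.I * lam * 1 ≠ 0 := by
      simp [Complex.I_ne_zero, hlam0]
    have h2 : (starRingEnd ℂ) q * p - q * (starRingEnd ℂ) p = 0 :=
      (mul_eq_zero.mp h1.symm).resolve_left h4
    linear_combination -h2
  · intro h k
    have := key k
    have h2 : (starRingEnd ℂ) q * p - q * (starRingEnd ℂ) p = 0 := by linear_combination -h
    rw [h2, mul_zero] at this
    exact sub_eq_zero.mp this
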